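/- Let λ ∈ (0,1], let (A,B) be controllable, and let X ⊆ ℝⁿ and U ⊆ ℝᵐ be C-sets. Let r̲_x, r̄_x, r̲_u > 0 with r̲_x ≤ r̄_x satisfy Bⁿ(r̲_x) ⊆ X ⊆ Bⁿ(r̄_x) and Bᵐ(r̲_u) ⊆ U, let α := max{1, max_{1≤j≤n} ‖A^j‖₂}, let Φ_n := (A^{n−1}B, …, AB, B), let ρ̂ := (λ^{n−1}/α)·min{ r̲_x/(1 + σ_max(Φ_n)/σ_min(Φ_n)), r̲_u·σ_min(Φ_n) }, and set η := 1 − ρ̂/r̄_x. Then d(Q_n^λ(C), Q_n^λ(D)) ≤ η·d(C,D) for all C-sets C, D ⊆ ℝⁿ with C ⊆ D. -/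

import Mathlib

open Set Metric Pointwise

noncomputable section

abbrev Euc (n : ℕ) := EuclideanSpace ℝ (Fin n)

def IsCSet {n : ℕ} (C : Set (Euc n)) : Prop :=
  Convex ℝ C ∧ IsCompact C ∧ (0 : Euc n) ∈ interior C

def rho {n : ℕ} (ξ : Euc n) (C : Set (Euc n)) : ℝ :=
  sSup {μ : ℝ | 0 < μ ∧ μ • ξ ∈ C}

def cdist {n : ℕ} (C D : Set (Euc n)) : ℝ :=
  ⨆ ξ : sphere (0 : Euc n) 1, |Real.log (rho ξ C) - Real.log (rho ξ D)|

def Q1 {n m : ℕ} (A : Matrix (Fin n) (Fin n) ℝ) (B : Matrix (Fin n) (Fin m) ℝ)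
    (X : Set (Euc n)) (U : Set (Euc m)) (lam : ℝ) (D : Set (Euc n)) : Set (Euc n) :=
  {x ∈ X | ∃ u ∈ U, WithLp.toLp 2 (A.mulVec x + B.mulVec u) ∈ lam • D}

def Qiter {n m : ℕ} (A : Matrix (Fin n) (Fin n) ℝ) (B : Matrix (Fin n) (Fin m) ℝ)
    (X : Set (Euc n)) (U : Set (Euc m)) (lam : ℝ) (D : Set (Euc n)) : ℕ → Set (Euc n)
  | 0 => D
  | k + 1 => Q1 A B X U lam (Qiter A B X U lam D k)

def IsContractive {n m : ℕ} (A : Matrix (Fin n) (Fin n) ℝ) (B : Matrix (Fin n) (Fin m) ℝ)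
    (X : Set (Euc n)) (U : Set (Euc m)) (lam : ℝ) (C : Set (Euc n)) : Prop :=
  C ⊆ X ∧ ∀ x ∈ C, ∃ u ∈ U, WithLp.toLp 2 (A.mulVec x + B.mulVec u) ∈ lam • C

def Cmax {n m : ℕ} (A : Matrix (Fin n) (Fin n) ℝ) (B : Matrix (Fin n) (Fin m) ℝ)
    (X : Set (Euc n)) (U : Set (Euc m)) (lam : ℝ) : Set (Euc n) :=
  ⋃₀ {C | IsContractive A B X U lam C}

def ctrb {n m : ℕ} (A : Matrix (Fin n) (Fin n) ℝ) (B : Matrix (Fin n) (Fin m) ℝ) :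
    Matrix (Fin n) (Fin n × Fin m) ℝ :=
  Matrix.of fun i p => (A ^ (n - 1 - (p.1 : ℕ)) * B) i p.2

def Controllable {n m : ℕ} (A : Matrix (Fin n) (Fin n) ℝ)
    (B : Matrix (Fin n) (Fin m) ℝ) : Prop :=
  (ctrb A B).rank = n

def enorm {ι : Type*} [Fintype ι] (v : ι → ℝ) : ℝ :=
  ‖(WithLp.equiv 2 (ι → ℝ)).symm v‖

def sigmaMax {n : ℕ} {ι : Type*} [Fintype ι] (Φ : Matrix (Fin n) ι ℝ) : ℝ :=
  ⨆ ξ : sphere (0 : EuclideanSpace ℝ ι) 1, enorm (Φ.mulVec ξ)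

def sigmaMin {n : ℕ} {ι : Type*} [Fintype ι] (Φ : Matrix (Fin n) ι ℝ) : ℝ :=
  ⨅ ξ : sphere (0 : Euc n) 1, enorm (Φ.transpose.mulVec ξ)

def alphaA {n : ℕ} (A : Matrix (Fin n) (Fin n) ℝ) : ℝ :=
  max 1 (⨆ j ∈ Finset.Icc 1 n, sigmaMax (A ^ j))

def rhoHat {n m : ℕ} (A : Matrix (Fin n) (Fin n) ℝ) (B : Matrix (Fin n) (Fin m) ℝ)
    (lam rx ru : ℝ) : ℝ :=
  lam ^ (n - 1) / alphaA A *
    min (rx / (1 + sigmaMax (ctrb A B) / sigmaMin (ctrb A B)))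
        (ru * sigmaMin (ctrb A B))

end

noncomputable section Aux
namespace Stmt8A

open Matrix

variable {ι κ : Type*} [Fintype ι] [Fintype κ]

/-- view a plain function as a Euclidean vector -/
def toE (v : ι → ℝ) : EuclideanSpace ℝ ι := WithLp.toLp 2 v

lemma enorm_eq_norm (v : ι → ℝ) : _root_.enorm v = ‖toE v‖ := rfl

def mvCLM (Φ : Matrix κ ι ℝ) : EuclideanSpace ℝ ι →L[ℝ] EuclideanSpace ℝ κ :=
  LinearMap.toContinuousLinearMap
    (((WithLp.linearEquiv 2 ℝ (κ → ℝ)).symm.toLinearMap.comp Φ.mulVecLin).comp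
      (WithLp.linearEquiv 2 ℝ (ι → ℝ)).toLinearMap)

lemma mvCLM_apply (Φ : Matrix κ ι ℝ) (v : EuclideanSpace ℝ ι) :
    mvCLM Φ v = toE (Φ.mulVec v) := rfl

lemma enorm_mulVec_le_op (Φ : Matrix κ ι ℝ) (v : EuclideanSpace ℝ ι) :
    _root_.enorm (Φ.mulVec v) ≤ ‖mvCLM Φ‖ * ‖v‖ := by
  rw [enorm_eq_norm, ← mvCLM_apply]
  exact (mvCLM Φ).le_opNorm v

lemma dot_eq_inner {ι : Type*} [Fintype ι] (x y : EuclideanSpace ℝ ι) :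
    dotProduct (x : ι → ℝ) (y : ι → ℝ) = inner ℝ x y := by
  rw [PiLp.inner_apply]
  simp [dotProduct, RCLike.inner_apply, mul_comm]

variable {n : ℕ}

lemma sigmaMax_nonneg (Φ : Matrix (Fin n) ι ℝ) : 0 ≤ sigmaMax Φ :=
  Real.iSup_nonneg fun ξ => norm_nonneg (toE (Φ.mulVec ξ))

lemma sigmaMin_nonneg (Φ : Matrix (Fin n) ι ℝ) : 0 ≤ sigmaMin Φ :=
  Real.iInf_nonneg fun ξ => norm_nonneg (toE (Φ.transpose.mulVec ξ))

lemma enorm_mulVec_le_sigmaMax [Nonempty ι] (Φ : Matrix (Fin n) ι ℝ) (v : EuclideanSpace ℝ ι) :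
    _root_.enorm (Φ.mulVec v) ≤ sigmaMax Φ * ‖v‖ := by
  have hbdd : BddAbove (Set.range fun ξ : sphere (0 : EuclideanSpace ℝ ι) 1 =>
      _root_.enorm (Φ.mulVec (ξ : EuclideanSpace ℝ ι))) := by
    refine ⟨‖mvCLM Φ‖, ?_⟩
    rintro r ⟨ξ, rfl⟩
    calc _root_.enorm (Φ.mulVec (ξ : EuclideanSpace ℝ ι)) ≤ ‖mvCLM Φ‖ * ‖(ξ : EuclideanSpace ℝ ι)‖ :=
          enorm_mulVec_le_op Φ ξ
      _ = ‖mvCLM Φ‖ := by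
          rw [mem_sphere_zero_iff_norm.mp ξ.2, mul_one]
  rcases eq_or_ne v 0 with rfl | hv
  · simp only [show Φ.mulVec ((0 : EuclideanSpace ℝ ι) : ι → ℝ) = 0 from Matrix.mulVec_zero _,
      norm_zero, mul_zero]
    rw [enorm_eq_norm]
    simp [toE]
  · have hvn : ‖v‖ ≠ 0 := norm_ne_zero_iff.mpr hv
    set ξ : EuclideanSpace ℝ ι := ‖v‖⁻¹ • v with hξ
    have hξs : ξ ∈ sphere (0 : EuclideanSpace ℝ ι) 1 := by
      simp [hξ, norm_smul, abs_of_nonneg (inv_nonneg.mpr (norm_nonneg v)),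
        inv_mul_cancel₀ hvn]
    have hle := le_ciSup hbdd (⟨ξ, hξs⟩ : sphere (0 : EuclideanSpace ℝ ι) 1)
    have hsub : Φ.mulVec (ξ : ι → ℝ) = ‖v‖⁻¹ • Φ.mulVec (v : ι → ℝ) := by
      show Φ.mulVec (‖v‖⁻¹ • (v : ι → ℝ)) = _
      rw [Matrix.mulVec_smul]
    have h1 : _root_.enorm (Φ.mulVec (ξ : ι → ℝ)) = ‖v‖⁻¹ * _root_.enorm (Φ.mulVec (v : ι → ℝ)) := by
      rw [hsub, enorm_eq_norm, enorm_eq_norm]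
      have : toE (‖v‖⁻¹ • Φ.mulVec (v : ι → ℝ)) = ‖v‖⁻¹ • toE (Φ.mulVec (v : ι → ℝ)) := rfl
      rw [this, norm_smul, Real.norm_eq_abs, abs_of_nonneg (inv_nonneg.mpr (norm_nonneg v))]
    rw [h1] at hle
    have h2 : _root_.enorm (Φ.mulVec (v : ι → ℝ)) = ‖v‖ * (‖v‖⁻¹ * _root_.enorm (Φ.mulVec (v : ι → ℝ))) := by
      field_simp
    rw [h2]
    calc ‖v‖ * (‖v‖⁻¹ * _root_.enorm (Φ.mulVec (v : ι → ℝ))) ≤ ‖v‖ * sigmaMax Φ :=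
          mul_le_mul_of_nonneg_left hle (norm_nonneg v)
      _ = sigmaMax Φ * ‖v‖ := mul_comm _ _

lemma sigmaMin_mul_le (Φ : Matrix (Fin n) ι ℝ) (ξ : Euc n) :
    sigmaMin Φ * ‖ξ‖ ≤ _root_.enorm (Φ.transpose.mulVec ξ) := by
  rcases eq_or_ne ξ 0 with rfl | hξ
  · simp only [norm_zero, mul_zero]
    rw [enorm_eq_norm]
    exact norm_nonneg _
  · have hξn : ‖ξ‖ ≠ 0 := norm_ne_zero_iff.mpr hξ
    set ζ : Euc n := ‖ξ‖⁻¹ • ξ with hζ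
    have hζs : ζ ∈ sphere (0 : Euc n) 1 := by
      simp [hζ, norm_smul, abs_of_nonneg (inv_nonneg.mpr (norm_nonneg ξ)),
        inv_mul_cancel₀ hξn]
    have hbb : BddBelow (Set.range fun ζ : sphere (0 : Euc n) 1 =>
        _root_.enorm (Φ.transpose.mulVec (ζ : Euc n))) := by
      refine ⟨0, ?_⟩
      rintro r ⟨ζ, rfl⟩
      exact norm_nonneg (toE _)
    have hle := ciInf_le hbb (⟨ζ, hζs⟩ : sphere (0 : Euc n) 1)
    have h1 : _root_.enorm (Φ.transpose.mulVec (ζ : Fin n → ℝ))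
        = ‖ξ‖⁻¹ * _root_.enorm (Φ.transpose.mulVec (ξ : Fin n → ℝ)) := by
      have hsub : Φ.transpose.mulVec (ζ : Fin n → ℝ)
          = ‖ξ‖⁻¹ • Φ.transpose.mulVec (ξ : Fin n → ℝ) := by
        show Φ.transpose.mulVec (‖ξ‖⁻¹ • (ξ : Fin n → ℝ)) = _
        rw [Matrix.mulVec_smul]
      rw [hsub, enorm_eq_norm, enorm_eq_norm]
      have : toE (‖ξ‖⁻¹ • Φ.transpose.mulVec (ξ : Fin n → ℝ))
          = ‖ξ‖⁻¹ • toE (Φ.transpose.mulVec (ξ : Fin n → ℝ)) := rfl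
      rw [this, norm_smul, Real.norm_eq_abs, abs_of_nonneg (inv_nonneg.mpr (norm_nonneg ξ))]
    rw [h1] at hle
    have := mul_le_mul_of_nonneg_left hle (norm_nonneg ξ)
    calc sigmaMin Φ * ‖ξ‖ = ‖ξ‖ * sigmaMin Φ := mul_comm _ _
      _ ≤ ‖ξ‖ * (‖ξ‖⁻¹ * _root_.enorm (Φ.transpose.mulVec (ξ : Fin n → ℝ))) := this
      _ = _root_.enorm (Φ.transpose.mulVec (ξ : Fin n → ℝ)) := by field_simp

lemma sigmaMin_pos (hn : 0 < n) (Φ : Matrix (Fin n) ι ℝ) (hrank : Φ.rank = n) :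
    0 < sigmaMin Φ := by
  have : Nontrivial (Euc n) := by
    have h1 : 0 < Module.finrank ℝ (Euc n) := by
      rw [finrank_euclideanSpace_fin]; exact hn
    exact Module.nontrivial_of_finrank_pos h1
  -- transpose mulVec is injective on nonzero vectors
  have hsurj : Function.Surjective Φ.mulVecLin := by
    rw [← LinearMap.range_eq_top]
    apply Submodule.eq_top_of_finrank_eq
    rw [← Matrix.rank, hrank, Module.finrank_fin_fun]
  have hinj : ∀ ξ : Euc n, Φ.transpose.mulVec (ξ : Fin n → ℝ) = 0 → ξ = 0 := by
    intro ξ hξ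
    have hdot : ∀ y : Fin n → ℝ, dotProduct (ξ : Fin n → ℝ) y = 0 := by
      intro y
      obtain ⟨w, hw⟩ := hsurj y
      rw [← hw]
      show dotProduct (ξ : Fin n → ℝ) (Φ.mulVec w) = 0
      rw [dotProduct_mulVec, ← Matrix.mulVec_transpose, hξ]
      exact zero_dotProduct _
    have := hdot (ξ : Fin n → ℝ)
    rw [dotProduct_self_eq_zero] at this
    exact WithLp.ofLp_injective (p := 2) this
  -- sphere compact nonempty, function continuous positive
  have hcmp : IsCompact (sphere (0 : Euc n) 1) := isCompact_sphere _ _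
  have hne : (sphere (0 : Euc n) 1).Nonempty := NormedSpace.sphere_nonempty.mpr zero_le_one
  have hcont : ContinuousOn (fun ξ : Euc n => ‖mvCLM Φ.transpose ξ‖) (sphere 0 1) :=
    ((mvCLM Φ.transpose).continuous.norm).continuousOn
  obtain ⟨ξ₀, hξ₀s, hmin⟩ := hcmp.exists_isMinOn hne hcont
  have hpos : 0 < ‖mvCLM Φ.transpose ξ₀‖ := by
    rw [norm_pos_iff]
    intro h0
    have : Φ.transpose.mulVec (ξ₀ : Fin n → ℝ) = 0 := by
      have := congrArg (fun v : EuclideanSpace ℝ ι => (v : ι → ℝ)) h0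
      exact this
    have := hinj ξ₀ this
    rw [this] at hξ₀s
    simp at hξ₀s
  haveI : Nonempty (sphere (0 : Euc n) 1) := hne.to_subtype
  refine lt_of_lt_of_le hpos (le_ciInf ?_)
  rintro ⟨ζ, hζ⟩
  exact hmin hζ

lemma least_norm (hn : 0 < n) (Φ : Matrix (Fin n) ι ℝ) (hσ : 0 < sigmaMin Φ)
    (y : Euc n) :
    ∃ w : EuclideanSpace ℝ ι, Φ.mulVec (w : ι → ℝ) = (y : Fin n → ℝ) ∧
      sigmaMin Φ * ‖w‖ ≤ ‖y‖ := by
  -- T = Φ Φᵀ as a linear endomorphism of Euc n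
  set T : Euc n →ₗ[ℝ] Euc n := ((mvCLM Φ).comp (mvCLM Φ.transpose)).toLinearMap with hT
  have hTapp : ∀ ξ : Euc n, T ξ = toE (Φ.mulVec (Φ.transpose.mulVec (ξ : Fin n → ℝ))) :=
    fun ξ => rfl
  have hTinj : Function.Injective T := by
    intro ξ₁ ξ₂ h
    have h0 : T (ξ₁ - ξ₂) = 0 := by rw [map_sub, h, sub_self]
    set ξ := ξ₁ - ξ₂
    have hw0 : Φ.transpose.mulVec (ξ : Fin n → ℝ) = 0 := by
      have hdot : dotProduct (Φ.transpose.mulVec (ξ : Fin n → ℝ))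
          (Φ.transpose.mulVec (ξ : Fin n → ℝ)) = 0 := by
        have h1 : dotProduct (ξ : Fin n → ℝ)
            (Φ.mulVec (Φ.transpose.mulVec (ξ : Fin n → ℝ))) = 0 := by
          have := congrArg (fun v : Euc n => dotProduct (ξ : Fin n → ℝ) (v : Fin n → ℝ)) h0
          simpa [hTapp, toE] using this
        rw [dotProduct_mulVec, ← Matrix.mulVec_transpose] at h1
        exact h1
      rwa [dotProduct_self_eq_zero] at hdot
    have : sigmaMin Φ * ‖ξ‖ ≤ 0 := by
      have := sigmaMin_mul_le Φ ξ
      rw [hw0] at this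
      calc sigmaMin Φ * ‖ξ‖ ≤ _root_.enorm (0 : ι → ℝ) := this
        _ = 0 := norm_zero
    have hξ0 : ξ = 0 := by
      have hnn := norm_nonneg ξ
      have : ‖ξ‖ ≤ 0 := by nlinarith
      exact norm_le_zero_iff.mp this
    exact sub_eq_zero.mp hξ0
  have hTsurj : Function.Surjective T := (LinearMap.injective_iff_surjective).mp hTinj
  obtain ⟨ξ, hξ⟩ := hTsurj y
  refine ⟨toE (Φ.transpose.mulVec (ξ : Fin n → ℝ)), ?_, ?_⟩
  · have := congrArg (fun v : Euc n => (v : Fin n → ℝ)) hξ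
    simpa [hTapp, toE] using this
  · set w : EuclideanSpace ℝ ι := toE (Φ.transpose.mulVec (ξ : Fin n → ℝ)) with hw
    -- ‖w‖^2 = ⟪ξ, y⟫ ≤ ‖ξ‖ ‖y‖
    have hw2 : ‖w‖ * ‖w‖ = dotProduct (ξ : Fin n → ℝ) (y : Fin n → ℝ) := by
      rw [← real_inner_self_eq_norm_mul_norm, ← dot_eq_inner]
      show dotProduct (Φ.transpose.mulVec (ξ : Fin n → ℝ)) (w : ι → ℝ) = _
      rw [Matrix.mulVec_transpose, ← dotProduct_mulVec]
      exact congrArg (fun v : Euc n => dotProduct (ξ : Fin n → ℝ) (v : Fin n → ℝ)) hξ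
    have hCS : dotProduct (ξ : Fin n → ℝ) (y : Fin n → ℝ) ≤ ‖ξ‖ * ‖y‖ := by
      rw [dot_eq_inner]; exact real_inner_le_norm ξ y
    have hξw : sigmaMin Φ * ‖ξ‖ ≤ ‖w‖ := sigmaMin_mul_le Φ ξ
    -- conclude
    rcases eq_or_lt_of_le (norm_nonneg w) with h0 | hwpos
    · rw [← h0, mul_zero]; exact norm_nonneg y
    · have h1 : ‖w‖ * ‖w‖ ≤ ‖ξ‖ * ‖y‖ := le_trans (le_of_eq hw2) hCS
      have h2 : sigmaMin Φ * (‖w‖ * ‖w‖) ≤ sigmaMin Φ * (‖ξ‖ * ‖y‖) :=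
        mul_le_mul_of_nonneg_left h1 (le_of_lt hσ)
      have h3 : sigmaMin Φ * ‖ξ‖ * ‖y‖ ≤ ‖w‖ * ‖y‖ :=
        mul_le_mul_of_nonneg_right hξw (norm_nonneg y)
      nlinarith

lemma norm_le_of_inj {ι κ : Type*} [Fintype ι] [Fintype κ]
    (v : EuclideanSpace ℝ ι) (w : EuclideanSpace ℝ κ) (f : ι → κ)
    (hinj : Set.InjOn f {i | v i ≠ 0})
    (hval : ∀ i, v i ≠ 0 → v i = w (f i)) : ‖v‖ ≤ ‖w‖ := by
  classical
  rw [EuclideanSpace.norm_eq, EuclideanSpace.norm_eq]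
  apply Real.sqrt_le_sqrt
  set s : Finset ι := Finset.univ.filter (fun i => v i ≠ 0) with hs
  have h1 : ∑ i, ‖v i‖ ^ 2 = ∑ i ∈ s, ‖v i‖ ^ 2 := by
    rw [hs]
    refine (Finset.sum_filter_of_ne ?_).symm
    intro i _ h
    intro h0
    rw [h0] at h
    simp at h
  rw [h1]
  have h2 : ∑ i ∈ s, ‖v i‖ ^ 2 = ∑ j ∈ s.image f, ‖w j‖ ^ 2 := by
    rw [Finset.sum_image ?_]
    · apply Finset.sum_congr rfl
      intro i hi
      rw [hs, Finset.mem_filter] at hi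
      rw [hval i hi.2]
    · intro i hi j hj hij
      rw [hs, Finset.mem_coe, Finset.mem_filter] at hi hj
      exact hinj hi.2 hj.2 hij
  rw [h2]
  apply Finset.sum_le_sum_of_subset_of_nonneg (Finset.subset_univ _)
  intro j _ _
  positivity

variable {n : ℕ}

lemma one_le_alphaA (A : Matrix (Fin n) (Fin n) ℝ) : 1 ≤ alphaA A := le_max_left _ _

lemma alphaA_pos (A : Matrix (Fin n) (Fin n) ℝ) : 0 < alphaA A :=
  lt_of_lt_of_le one_pos (one_le_alphaA A)

lemma sigmaMax_le_alphaA (A : Matrix (Fin n) (Fin n) ℝ) {j : ℕ} (hj1 : 1 ≤ j) (hj2 : j ≤ n) :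
    sigmaMax (A ^ j) ≤ alphaA A := by
  refine le_trans ?_ (le_max_right _ _)
  have hmem : j ∈ Finset.Icc 1 n := Finset.mem_Icc.mpr ⟨hj1, hj2⟩
  have hbdd : BddAbove (Set.range fun i : ℕ =>
      ⨆ _ : i ∈ Finset.Icc 1 n, sigmaMax (A ^ i)) := by
    refine ⟨∑ i ∈ Finset.Icc 1 n, max 0 (sigmaMax (A ^ i)), ?_⟩
    rintro r ⟨i, rfl⟩
    show (⨆ _ : i ∈ Finset.Icc 1 n, sigmaMax (A ^ i)) ≤ _
    by_cases h : i ∈ Finset.Icc 1 n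
    · rw [ciSup_pos h]
      calc sigmaMax (A ^ i) ≤ max 0 (sigmaMax (A ^ i)) := le_max_right _ _
        _ ≤ ∑ i ∈ Finset.Icc 1 n, max 0 (sigmaMax (A ^ i)) :=
            Finset.single_le_sum (f := fun i => max 0 (sigmaMax (A ^ i))) (fun i _ => le_max_left _ _) h
    · have : IsEmpty (i ∈ Finset.Icc 1 n : Prop) := by
        exact isEmpty_Prop.mpr h
      rw [show (⨆ _ : i ∈ Finset.Icc 1 n, sigmaMax (A ^ i)) = sSup ∅ by
        rw [iSup, Set.range_eq_empty]]
      rw [Real.sSup_empty]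
      exact Finset.sum_nonneg fun i _ => le_max_left _ _
  have := le_ciSup hbdd j
  rw [ciSup_pos hmem] at this
  exact this

lemma enorm_pow_mulVec_le (hn : 0 < n) (A : Matrix (Fin n) (Fin n) ℝ) {j : ℕ} (hj : j ≤ n)
    (x : Euc n) : _root_.enorm ((A ^ j).mulVec (x : Fin n → ℝ)) ≤ alphaA A * ‖x‖ := by
  rcases Nat.eq_zero_or_pos j with rfl | hj1
  · have : (A ^ 0).mulVec (x : Fin n → ℝ) = (x : Fin n → ℝ) := by
      rw [pow_zero, Matrix.one_mulVec]
    rw [this, enorm_eq_norm]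
    have : toE (x : Fin n → ℝ) = x := rfl
    rw [this]
    nlinarith [one_le_alphaA A, norm_nonneg x]
  · haveI : Nonempty (Fin n) := ⟨⟨0, hn⟩⟩
    calc _root_.enorm ((A ^ j).mulVec (x : Fin n → ℝ)) ≤ sigmaMax (A ^ j) * ‖x‖ :=
          enorm_mulVec_le_sigmaMax _ x
      _ ≤ alphaA A * ‖x‖ :=
          mul_le_mul_of_nonneg_right (sigmaMax_le_alphaA A hj1 hj) (norm_nonneg x)

lemma ctrb_mulVec {n m : ℕ} (A : Matrix (Fin n) (Fin n) ℝ) (B : Matrix (Fin n) (Fin m) ℝ)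
    (v : Fin n × Fin m → ℝ) :
    (ctrb A B).mulVec v = ∑ p : Fin n, (A ^ (n - 1 - (p : ℕ)) * B).mulVec (fun j => v (p, j)) := by
  funext i
  simp only [Matrix.mulVec, dotProduct, ctrb, Matrix.of_apply, Fintype.sum_prod_type,
    Finset.sum_apply]

lemma steer {n m : ℕ} (hn : 0 < n) (A : Matrix (Fin n) (Fin n) ℝ) (B : Matrix (Fin n) (Fin m) ℝ)
    (hAB : Controllable A B) (lam rxlo ru : ℝ) (hlam0 : 0 < lam) (hlam1 : lam ≤ 1)
    (hrxlo : 0 < rxlo) (hru : 0 < ru)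
    (x : Euc n) (hx : ‖x‖ ≤ rhoHat A B lam rxlo ru) :
    ∃ (xs : ℕ → Euc n) (us : ℕ → Euc m),
      xs 0 = x ∧ xs n = 0 ∧
      (∀ j, (xs (j+1) : Fin n → ℝ) = A.mulVec (xs j : Fin n → ℝ) + B.mulVec (us j : Fin m → ℝ)) ∧
      (∀ j < n, ‖xs j‖ ≤ lam ^ j * rxlo) ∧ (∀ j < n, ‖us j‖ ≤ lam ^ j * ru) := by
  classical
  set Φ := ctrb A B with hΦdef
  have hm : 0 < m := by
    by_contra h
    push_neg at h
    have h0 : m = 0 := by omega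
    have hcard := Matrix.rank_le_card_width Φ
    rw [hAB] at hcard
    simp only [Fintype.card_prod, Fintype.card_fin, h0, mul_zero] at hcard
    omega
  haveI : Nonempty (Fin n × Fin m) := ⟨(⟨0, hn⟩, ⟨0, hm⟩)⟩
  have hσ : 0 < sigmaMin Φ := sigmaMin_pos hn Φ hAB
  have hα := one_le_alphaA A
  have hαpos := alphaA_pos A
  have hσM := sigmaMax_nonneg Φ
  set σm := sigmaMin Φ
  set σM := sigmaMax Φ
  set α := alphaA A
  set y : Euc n := toE (-(A ^ n).mulVec (x : Fin n → ℝ)) with hy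
  obtain ⟨w, hw1, hw2⟩ := least_norm hn Φ hσ y
  have hyn : ‖y‖ ≤ α * ‖x‖ := by
    have h1 : ‖y‖ = _root_.enorm ((A ^ n).mulVec (x : Fin n → ℝ)) := by
      rw [enorm_eq_norm]
      have : y = -toE ((A ^ n).mulVec (x : Fin n → ℝ)) := rfl
      rw [this, norm_neg]
    rw [h1]
    exact enorm_pow_mulVec_le hn A le_rfl x
  have hwb : σm * ‖w‖ ≤ α * ‖x‖ := le_trans hw2 hyn
  -- controls
  set us : ℕ → Euc m := fun k => if h : k < n then toE (fun j => w (⟨k, h⟩, j)) else 0 with hus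
  have husw : ∀ k, ‖us k‖ ≤ ‖w‖ := by
    intro k
    simp only [hus]
    by_cases h : k < n
    · rw [dif_pos h]
      refine norm_le_of_inj _ w (fun j => (⟨k, h⟩, j)) ?_ ?_
      · intro i _ j _ hij
        exact (Prod.mk.injEq _ _ _ _ ▸ hij).2
      · intro i _
        rfl
    · rw [dif_neg h, norm_zero]
      exact norm_nonneg w
  -- states
  set xs : ℕ → Euc n := fun k =>
    Nat.rec x (fun j xj => toE (A.mulVec (xj : Fin n → ℝ) + B.mulVec (us j : Fin m → ℝ))) k
    with hxs
  have hrec : ∀ j, (xs (j+1) : Fin n → ℝ)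
      = A.mulVec (xs j : Fin n → ℝ) + B.mulVec (us j : Fin m → ℝ) := fun j => rfl
  -- shifted stacked control vectors
  set W : ℕ → EuclideanSpace ℝ (Fin n × Fin m) := fun k =>
    toE (fun p => if n ≤ (p.1 : ℕ) + k then (us ((p.1 : ℕ) + k - n) : Fin m → ℝ) p.2 else 0)
    with hW
  have hWn : ∀ k, k ≤ n → ‖W k‖ ≤ ‖w‖ := by
    intro k hk
    refine norm_le_of_inj _ w
      (fun p => (⟨((p.1 : ℕ) + k - n) % n, Nat.mod_lt _ hn⟩, p.2)) ?_ ?_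
    · rintro ⟨p1, j1⟩ h1 ⟨p2, j2⟩ h2 heq
      simp only [Set.mem_setOf_eq, hW, toE] at h1 h2
      by_cases hc1 : n ≤ (p1 : ℕ) + k
      swap; · rw [if_neg hc1] at h1; exact absurd rfl h1
      by_cases hc2 : n ≤ (p2 : ℕ) + k
      swap; · rw [if_neg hc2] at h2; exact absurd rfl h2
      rw [if_pos hc1] at h1; rw [if_pos hc2] at h2
      have hl1 : (p1 : ℕ) + k - n < n := by
        by_contra hcon
        push_neg at hcon
        simp only [hus] at h1
        rw [dif_neg (by omega)] at h1
        exact h1 rfl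
      have hl2 : (p2 : ℕ) + k - n < n := by
        by_contra hcon
        push_neg at hcon
        simp only [hus] at h2
        rw [dif_neg (by omega)] at h2
        exact h2 rfl
      obtain ⟨hfst, hsnd⟩ := Prod.mk.injEq .. ▸ heq
      have := congrArg Fin.val hfst
      simp only [Nat.mod_eq_of_lt hl1, Nat.mod_eq_of_lt hl2] at this
      have hp : p1 = p2 := by
        apply Fin.ext
        have hp1n := p1.2
        have hp2n := p2.2
        omega
      exact Prod.ext hp hsnd
    · rintro ⟨p, j⟩ hne
      simp only [Set.mem_setOf_eq, hW, toE] at hne ⊢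
      by_cases hc : n ≤ (p : ℕ) + k
      swap; · rw [if_neg hc] at hne; exact absurd rfl hne
      rw [if_pos hc] at hne ⊢
      have hl : (p : ℕ) + k - n < n := by
        by_contra hcon
        push_neg at hcon
        simp only [hus] at hne
        rw [dif_neg (by omega)] at hne
        exact hne rfl
      simp only [hus] at hne ⊢
      rw [dif_pos hl] at hne ⊢
      show w _ = w _
      simp only [Nat.mod_eq_of_lt hl]
  -- block decomposition of Φ.mulVec (W k)
  have hsum : ∀ k, k ≤ n → Φ.mulVec (W k : Fin n × Fin m → ℝ)
      = ∑ j ∈ Finset.range k, (A ^ (k - 1 - j) * B).mulVec (us j : Fin m → ℝ) := by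
    intro k hk
    rw [hΦdef, ctrb_mulVec]
    have hterm : ∀ p : Fin n, (A ^ (n - 1 - (p : ℕ)) * B).mulVec (fun j => (W k : Fin n × Fin m → ℝ) (p, j))
        = (fun i : ℕ => if n ≤ i + k then
            (A ^ (n - 1 - i) * B).mulVec (us (i + k - n) : Fin m → ℝ) else 0) (p : ℕ) := by
      intro p
      by_cases hc : n ≤ (p : ℕ) + k
      · simp only [hW, toE, if_pos hc]
      · simp only [hW, toE, if_neg hc]
        rw [show (fun j : Fin m => (0 : ℝ)) = (0 : Fin m → ℝ) from rfl, Matrix.mulVec_zero]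
    rw [Finset.sum_congr rfl (fun p _ => hterm p), ← Finset.sum_range
      (f := fun i : ℕ => if n ≤ i + k then
        (A ^ (n - 1 - i) * B).mulVec (us (i + k - n) : Fin m → ℝ) else 0)]
    conv_lhs => rw [Finset.range_eq_Ico, ← Finset.sum_Ico_consecutive _ (Nat.zero_le (n - k)) (Nat.sub_le n k)]
    have hfirst : ∑ i ∈ Finset.Ico 0 (n - k), (if n ≤ i + k then
        (A ^ (n - 1 - i) * B).mulVec (us (i + k - n) : Fin m → ℝ) else 0) = 0 := by
      apply Finset.sum_eq_zero
      intro i hi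
      rw [Finset.mem_Ico] at hi
      rw [if_neg (by omega)]
    conv_lhs => rw [hfirst, zero_add, Finset.sum_Ico_eq_sum_range]
    have hnk : n - (n - k) = k := by omega
    conv_lhs => rw [hnk]
    apply Finset.sum_congr rfl
    intro j hj
    rw [Finset.mem_range] at hj
    have e0 : n ≤ (n - k + j) + k := by omega
    have e1 : n - k + j + k - n = j := by omega
    have e2 : n - 1 - (n - k + j) = k - 1 - j := by omega
    rw [if_pos e0, e1, e2]
  -- state representation
  have hrep : ∀ k, k ≤ n → (xs k : Fin n → ℝ)
      = (A ^ k).mulVec (x : Fin n → ℝ) + Φ.mulVec (W k : Fin n × Fin m → ℝ) := by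
    intro k hk
    induction k with
    | zero =>
        rw [hsum 0 (Nat.zero_le n), Finset.range_zero, Finset.sum_empty, pow_zero,
          Matrix.one_mulVec, add_zero]
        rfl
    | succ k ih =>
        have hk' : k ≤ n := by omega
        rw [hrec k, ih hk', hsum k hk', hsum (k+1) hk, Matrix.mulVec_add]
        rw [Finset.sum_range_succ]
        have hAk : A.mulVec ((A ^ k).mulVec (x : Fin n → ℝ)) = (A ^ (k+1)).mulVec (x : Fin n → ℝ) := by
          rw [Matrix.mulVec_mulVec, ← pow_succ']
        have hAS : A.mulVec (∑ j ∈ Finset.range k, (A ^ (k - 1 - j) * B).mulVec (us j : Fin m → ℝ))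
            = ∑ j ∈ Finset.range k, (A ^ (k + 1 - 1 - j) * B).mulVec (us j : Fin m → ℝ) := by
          rw [show A.mulVec (∑ j ∈ Finset.range k, (A ^ (k - 1 - j) * B).mulVec (us j : Fin m → ℝ))
              = A.mulVecLin (∑ j ∈ Finset.range k, (A ^ (k - 1 - j) * B).mulVec (us j : Fin m → ℝ))
            from rfl, map_sum]
          apply Finset.sum_congr rfl
          intro j hj
          rw [Finset.mem_range] at hj
          show A.mulVec ((A ^ (k - 1 - j) * B).mulVec (us j : Fin m → ℝ)) = _
          have hjj : k - 1 - j + 1 = k + 1 - 1 - j := by omega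
          rw [Matrix.mulVec_mulVec, ← Matrix.mul_assoc, ← pow_succ', hjj]
        rw [hAk, hAS]
        have : k + 1 - 1 - k = 0 := by omega
        rw [this, pow_zero, Matrix.one_mul]
        abel
  -- final state is zero
  have hxsn : xs n = 0 := by
    have hWnw : (W n : Fin n × Fin m → ℝ) = (w : Fin n × Fin m → ℝ) := by
      funext p
      simp only [hW, toE]
      have hc : n ≤ (p.1 : ℕ) + n := by omega
      rw [if_pos hc]
      have e1 : (p.1 : ℕ) + n - n = (p.1 : ℕ) := by omega
      rw [e1]; simp only [hus]; rw [dif_pos p.1.2]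
      show w _ = w p
      congr 1
    have : (xs n : Fin n → ℝ) = 0 := by
      rw [hrep n le_rfl, hWnw, hw1, hy]
      exact add_neg_cancel _
    exact WithLp.ofLp_injective (p := 2) this
  -- norm bounds
  have hαx : α * ‖x‖ ≤ lam ^ (n-1) * min (rxlo / (1 + σM / σm)) (ru * σm) := by
    have := mul_le_mul_of_nonneg_left hx (le_of_lt hαpos)
    calc α * ‖x‖ ≤ α * rhoHat A B lam rxlo ru := this
      _ = lam ^ (n-1) * min (rxlo / (1 + σM / σm)) (ru * σm) := by
          rw [rhoHat]
          show α * (lam ^ (n-1) / α * min (rxlo / (1 + σM / σm)) (ru * σm)) = _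
          field_simp
  have hden : (0:ℝ) < 1 + σM / σm := by positivity
  have hxsk : ∀ k < n, ‖xs k‖ ≤ lam ^ k * rxlo := by
    intro k hkn
    have hk : k ≤ n := le_of_lt hkn
    have h1 : ‖xs k‖ ≤ ‖toE ((A ^ k).mulVec (x : Fin n → ℝ))‖
        + ‖toE (Φ.mulVec (W k : Fin n × Fin m → ℝ))‖ := by
      have : xs k = toE ((A ^ k).mulVec (x : Fin n → ℝ))
          + toE (Φ.mulVec (W k : Fin n × Fin m → ℝ)) := by
        have := hrep k hk
        apply WithLp.ofLp_injective (p := 2); rw [this]; simp [toE]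
      rw [this]
      exact norm_add_le _ _
    have h2 : ‖toE ((A ^ k).mulVec (x : Fin n → ℝ))‖ ≤ α * ‖x‖ := enorm_pow_mulVec_le hn A hk x
    have h3 : ‖toE (Φ.mulVec (W k : Fin n × Fin m → ℝ))‖ ≤ σM * ‖W k‖ :=
      enorm_mulVec_le_sigmaMax Φ (W k)
    have h4 : σM * ‖W k‖ ≤ σM * ‖w‖ := mul_le_mul_of_nonneg_left (hWn k hk) hσM
    -- σm ‖w‖ ≤ α ‖x‖ gives ‖w‖ ≤ α ‖x‖ / σm
    have h5 : ‖w‖ ≤ α * ‖x‖ / σm := by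
      rw [le_div_iff₀ hσ]
      linarith [hwb]
    have h6 : ‖xs k‖ ≤ α * ‖x‖ * (1 + σM / σm) := by
      have : σM * ‖w‖ ≤ σM * (α * ‖x‖ / σm) := mul_le_mul_of_nonneg_left h5 hσM
      have hexp : α * ‖x‖ + σM * (α * ‖x‖ / σm) = α * ‖x‖ * (1 + σM / σm) := by
        field_simp
      linarith
    have h7 : α * ‖x‖ * (1 + σM / σm) ≤ lam ^ (n-1) * rxlo := by
      have hmin : min (rxlo / (1 + σM / σm)) (ru * σm) ≤ rxlo / (1 + σM / σm) := min_le_left _ _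
      have h8 : α * ‖x‖ ≤ lam ^ (n-1) * (rxlo / (1 + σM / σm)) := by
        calc α * ‖x‖ ≤ lam ^ (n-1) * min (rxlo / (1 + σM / σm)) (ru * σm) := hαx
          _ ≤ lam ^ (n-1) * (rxlo / (1 + σM / σm)) :=
              mul_le_mul_of_nonneg_left hmin (by positivity)
      calc α * ‖x‖ * (1 + σM / σm) ≤ lam ^ (n-1) * (rxlo / (1 + σM / σm)) * (1 + σM / σm) :=
            mul_le_mul_of_nonneg_right h8 (le_of_lt hden)
        _ = lam ^ (n-1) * rxlo := by
            field_simp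
    have h9 : lam ^ (n-1) * rxlo ≤ lam ^ k * rxlo := by
      apply mul_le_mul_of_nonneg_right _ (le_of_lt hrxlo)
      apply pow_le_pow_of_le_one (le_of_lt hlam0) hlam1
      omega
    linarith
  have husk : ∀ k < n, ‖us k‖ ≤ lam ^ k * ru := by
    intro k hkn
    have h5 : σm * ‖us k‖ ≤ α * ‖x‖ := by
      calc σm * ‖us k‖ ≤ σm * ‖w‖ := mul_le_mul_of_nonneg_left (husw k) (le_of_lt hσ)
        _ ≤ α * ‖x‖ := hwb
    have h6 : α * ‖x‖ ≤ lam ^ (n-1) * (ru * σm) := by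
      calc α * ‖x‖ ≤ lam ^ (n-1) * min (rxlo / (1 + σM / σm)) (ru * σm) := hαx
        _ ≤ lam ^ (n-1) * (ru * σm) :=
            mul_le_mul_of_nonneg_left (min_le_right _ _) (by positivity)
    have h7 : ‖us k‖ ≤ lam ^ (n-1) * ru := by
      have := le_trans h5 h6
      rw [show lam ^ (n-1) * (ru * σm) = (lam ^ (n-1) * ru) * σm by ring] at this
      nlinarith
    have h9 : lam ^ (n-1) * ru ≤ lam ^ k * ru := by
      apply mul_le_mul_of_nonneg_right _ (le_of_lt hru)
      apply pow_le_pow_of_le_one (le_of_lt hlam0) hlam1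
      omega
    linarith
  exact ⟨xs, us, rfl, hxsn, hrec, hxsk, husk⟩

section Qlem
variable {n m : ℕ} {A : Matrix (Fin n) (Fin n) ℝ} {B : Matrix (Fin n) (Fin m) ℝ}
  {X : Set (Euc n)} {U : Set (Euc m)} {lam : ℝ}

lemma Qiter_mono {C D : Set (Euc n)} (h : C ⊆ D) :
    ∀ k, Qiter A B X U lam C k ⊆ Qiter A B X U lam D k := by
  intro k
  induction k with
  | zero => exact h
  | succ k ih =>
    rintro x ⟨hxX, u, hu, hmem⟩
    exact ⟨hxX, u, hu, Set.smul_set_mono ih hmem⟩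

lemma zero_mem_Qiter (h0X : (0 : Euc n) ∈ X) (h0U : (0 : Euc m) ∈ U)
    {D : Set (Euc n)} (h0D : (0 : Euc n) ∈ D) :
    ∀ k, (0 : Euc n) ∈ Qiter A B X U lam D k := by
  intro k
  induction k with
  | zero => exact h0D
  | succ k ih =>
    refine ⟨h0X, 0, h0U, ?_⟩
    have h : WithLp.toLp 2 (A.mulVec ((0 : Euc n) : Fin n → ℝ) + B.mulVec ((0 : Euc m) : Fin m → ℝ))
        = (0 : Euc n) := by
      simp
    rw [h]
    exact ⟨0, ih, smul_zero lam⟩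

lemma Qiter_subset_X (hn : 0 < n) {D : Set (Euc n)} :
    Qiter A B X U lam D n ⊆ X := by
  obtain ⟨k, rfl⟩ : ∃ k, n = k + 1 := ⟨n - 1, by omega⟩
  rintro x ⟨hxX, -⟩
  exact hxX

lemma key_combine (hXc : Convex ℝ X) (hUc : Convex ℝ U) (hlam0 : 0 < lam)
    {rxlo ru : ℝ}
    (hbX1 : closedBall (0 : Euc n) rxlo ⊆ X) (hbU : closedBall (0 : Euc m) ru ⊆ U)
    (γ : ℝ) (hγ0 : 0 ≤ γ) (hγ1 : γ ≤ 1) :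
    ∀ (k : ℕ) (C D : Set (Euc n)), (∀ z ∈ D, γ • z ∈ C) →
      ∀ y ∈ Qiter A B X U lam D k, ∀ (xs : ℕ → Euc n) (us : ℕ → Euc m),
        xs k = 0 →
        (∀ j, (xs (j+1) : Fin n → ℝ)
          = A.mulVec (xs j : Fin n → ℝ) + B.mulVec (us j : Fin m → ℝ)) →
        (∀ j < k, ‖xs j‖ ≤ lam ^ j * rxlo) → (∀ j < k, ‖us j‖ ≤ lam ^ j * ru) →
        γ • y + (1-γ) • xs 0 ∈ Qiter A B X U lam C k := by
  intro k
  induction k with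
  | zero =>
    intro C D hγD y hy xs us hxs0 _ _ _
    rw [hxs0, smul_zero, add_zero]
    exact hγD y hy
  | succ k ih =>
    intro C D hγD y hy xs us hxsk hrec hxb hub
    obtain ⟨hyX, u, hu, hmem⟩ := hy
    obtain ⟨y'0, hy'0, hyeq0⟩ := Set.mem_smul_set.mp hmem
    -- Euclidean versions of the linear maps
    set La : Euc n →L[ℝ] Euc n := mvCLM A with hLa
    set Lb : Euc m →L[ℝ] Euc n := mvCLM B with hLb
    set y' : Euc n := toE y'0 with hy'def
    have hy' : y' ∈ Qiter A B X U lam D k := hy'0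
    have hyeqE : La y + Lb u = lam • y' := hyeq0.symm
    have hrecE : ∀ j, xs (j+1) = La (xs j) + Lb (us j) := fun j => by
      apply WithLp.ofLp_injective (p := 2); rw [hrec j]; simp [hLa, hLb, mvCLM_apply, toE]
    -- shifted certificates
    set xs' : ℕ → Euc n := fun j => lam⁻¹ • xs (j+1) with hxs'
    set us' : ℕ → Euc m := fun j => lam⁻¹ • us (j+1) with hus'
    have hinv0 : (0:ℝ) ≤ lam⁻¹ := inv_nonneg.mpr (le_of_lt hlam0)
    have hihres : γ • y' + (1-γ) • xs' 0 ∈ Qiter A B X U lam C k := by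
      apply ih C D hγD y' hy' xs' us'
      · rw [hxs']
        show lam⁻¹ • xs (k+1) = 0
        rw [hxsk, smul_zero]
      · intro j
        have h2 : xs (j+1+1) = La (xs (j+1)) + Lb (us (j+1)) := hrecE (j+1)
        have h3 : xs' (j+1) = La (xs' j) + Lb (us' j) := by
          show lam⁻¹ • xs (j+1+1) = La (lam⁻¹ • xs (j+1)) + Lb (lam⁻¹ • us (j+1))
          rw [h2, smul_add, _root_.map_smul, _root_.map_smul]
        rw [h3]; simp [hLa, hLb, mvCLM_apply, toE]
      · intro j hj
        rw [hxs']
        show ‖lam⁻¹ • xs (j+1)‖ ≤ _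
        rw [norm_smul, Real.norm_eq_abs, abs_of_nonneg hinv0]
        have hb := hxb (j+1) (by omega)
        have hc : lam⁻¹ * ‖xs (j+1)‖ ≤ lam⁻¹ * (lam ^ (j+1) * rxlo) :=
          mul_le_mul_of_nonneg_left hb hinv0
        have he : lam⁻¹ * (lam ^ (j+1) * rxlo) = lam ^ j * rxlo := by
          rw [pow_succ']
          field_simp
        linarith
      · intro j hj
        rw [hus']
        show ‖lam⁻¹ • us (j+1)‖ ≤ _
        rw [norm_smul, Real.norm_eq_abs, abs_of_nonneg hinv0]
        have hb := hub (j+1) (by omega)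
        have hc : lam⁻¹ * ‖us (j+1)‖ ≤ lam⁻¹ * (lam ^ (j+1) * ru) :=
          mul_le_mul_of_nonneg_left hb hinv0
        have he : lam⁻¹ * (lam ^ (j+1) * ru) = lam ^ j * ru := by
          rw [pow_succ']
          field_simp
        linarith
    -- memberships of the ingredients
    have hx0X : xs 0 ∈ X := by
      apply hbX1
      rw [mem_closedBall_zero_iff]
      have := hxb 0 (by omega)
      simpa using this
    have hu0U : us 0 ∈ U := by
      apply hbU
      rw [mem_closedBall_zero_iff]
      have := hub 0 (by omega)
      simpa using this
    refine ⟨hXc hyX hx0X hγ0 (by linarith) (by ring), γ • u + (1-γ) • us 0,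
      hUc hu hu0U hγ0 (by linarith) (by ring), ?_⟩
    have h1 : xs 1 = La (xs 0) + Lb (us 0) := hrecE 0
    have hRHS : lam • (γ • y' + (1-γ) • xs' 0)
        = γ • (La y + Lb u) + (1-γ) • (La (xs 0) + Lb (us 0)) := by
      have h2 : xs' 0 = lam⁻¹ • xs 1 := rfl
      rw [h2, smul_add, smul_smul, smul_smul, smul_smul]
      rw [show lam * γ = γ * lam from mul_comm _ _, ← smul_smul, ← hyeqE]
      rw [show lam * (1-γ) * lam⁻¹ = 1-γ by field_simp]
      rw [h1]
    have hcalc : La (γ • y + (1-γ) • xs 0) + Lb (γ • u + (1-γ) • us 0)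
        = lam • (γ • y' + (1-γ) • xs' 0) := by
      rw [hRHS, _root_.map_add, _root_.map_add, _root_.map_smul, _root_.map_smul, _root_.map_smul, _root_.map_smul,
        smul_add, smul_add]
      abel
    have hgoal : WithLp.toLp 2 (A.mulVec ((γ • y + (1-γ) • xs 0 : Euc n) : Fin n → ℝ)
        + B.mulVec ((γ • u + (1-γ) • us 0 : Euc m) : Fin m → ℝ))
        ∈ lam • Qiter A B X U lam C k := by
      have hmm : La (γ • y + (1-γ) • xs 0) + Lb (γ • u + (1-γ) • us 0)
          ∈ lam • Qiter A B X U lam C k := by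
        rw [hcalc]
        exact Set.smul_mem_smul_set hihres
      exact hmm
    exact hgoal
end Qlem

section RhoLem
variable {n : ℕ}

lemma rho_le_R {S : Set (Euc n)} {R : ℝ} (hR : 0 ≤ R) (hS : S ⊆ closedBall 0 R)
    {ξ : Euc n} (hξ : ‖ξ‖ = 1) : rho ξ S ≤ R := by
  apply Real.sSup_le _ hR
  rintro μ ⟨hμ, hmem⟩
  have h := hS hmem
  rwa [mem_closedBall_zero_iff, norm_smul, hξ, mul_one, Real.norm_eq_abs,
    abs_of_pos hμ] at h

lemma bddAbove_rho_set {S : Set (Euc n)} {R : ℝ} (hS : S ⊆ closedBall 0 R)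
    {ξ : Euc n} (hξ : ‖ξ‖ = 1) : BddAbove {μ : ℝ | 0 < μ ∧ μ • ξ ∈ S} := by
  refine ⟨R, ?_⟩
  rintro μ ⟨hμ, hmem⟩
  have h := hS hmem
  rwa [mem_closedBall_zero_iff, norm_smul, hξ, mul_one, Real.norm_eq_abs,
    abs_of_pos hμ] at h

lemma le_rho {S : Set (Euc n)} {R : ℝ} (hS : S ⊆ closedBall 0 R)
    {ξ : Euc n} (hξ : ‖ξ‖ = 1) {μ : ℝ} (hμ : 0 < μ) (hmem : μ • ξ ∈ S) :
    μ ≤ rho ξ S :=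
  le_csSup (bddAbove_rho_set hS hξ) ⟨hμ, hmem⟩

lemma smul_mem_of_le_rho {S : Set (Euc n)} (hconv : Convex ℝ S) (hclosed : IsClosed S)
    (h0 : (0 : Euc n) ∈ S) {ξ : Euc n} (hξ : ‖ξ‖ = 1)
    {μ : ℝ} (hμ0 : 0 < μ) (hμ : μ ≤ rho ξ S) : μ • ξ ∈ S := by
  have hTne : {ν : ℝ | 0 < ν ∧ ν • ξ ∈ S}.Nonempty := by
    by_contra h
    rw [Set.not_nonempty_iff_eq_empty] at h
    have : rho ξ S = 0 := by rw [rho, h, Real.sSup_empty]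
    linarith
  have hIoo : ∀ ν : ℝ, 0 < ν → ν < rho ξ S → ν • ξ ∈ S := by
    intro ν hν0 hν
    obtain ⟨ν', hν'T, hlt⟩ := exists_lt_of_lt_csSup hTne hν
    obtain ⟨hν'0, hν'S⟩ := hν'T
    have heq : ν • ξ = (ν / ν') • (ν' • ξ) := by
      rw [smul_smul, div_mul_cancel₀ _ (ne_of_gt hν'0)]
    rw [heq]
    exact (hconv.starConvex h0).smul_mem hν'S (by positivity)
      ((div_le_one hν'0).mpr (le_of_lt hlt))
  rcases lt_or_eq_of_le hμ with h | h
  · exact hIoo μ hμ0 h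
  · have hM : IsClosed {ν : ℝ | ν • ξ ∈ S} :=
      hclosed.preimage (continuous_id.smul continuous_const)
    have hsub : Set.Ioo (0:ℝ) μ ⊆ {ν : ℝ | ν • ξ ∈ S} := by
      intro ν hν
      exact hIoo ν hν.1 (h ▸ hν.2)
    have hμcl : μ ∈ closure (Set.Ioo (0:ℝ) μ) := by
      rw [closure_Ioo (ne_of_lt hμ0)]
      exact ⟨le_of_lt hμ0, le_rfl⟩
    have := closure_mono hsub hμcl
    rwa [hM.closure_eq] at this

lemma csets_rho_bounds {C : Set (Euc n)} (hC : IsCSet C) :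
    ∃ r R : ℝ, 0 < r ∧ r ≤ R ∧ C ⊆ closedBall 0 R ∧
      ∀ ξ : Euc n, ‖ξ‖ = 1 → r ≤ rho ξ C ∧ rho ξ C ≤ R := by
  obtain ⟨hconv, hcomp, hint⟩ := hC
  obtain ⟨ε, hε, hball⟩ := Metric.mem_nhds_iff.mp (mem_interior_iff_mem_nhds.mp hint)
  obtain ⟨R₀, hR₀⟩ := hcomp.isBounded.subset_closedBall 0
  set R : ℝ := max R₀ (ε/2) with hR
  have hballR : C ⊆ closedBall 0 R :=
    hR₀.trans (closedBall_subset_closedBall (le_max_left _ _))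
  have hr2 : 0 < ε/2 := by linarith
  refine ⟨ε/2, R, hr2, ?_, hballR, ?_⟩
  · exact le_max_right _ _
  · intro ξ hξ
    constructor
    · apply le_rho hballR hξ hr2
      apply hball
      rw [mem_ball_zero_iff, norm_smul, hξ, mul_one, Real.norm_eq_abs, abs_of_pos hr2]
      linarith
    · exact rho_le_R (le_trans (le_of_lt hr2) (le_max_right _ _)) hballR hξ

end RhoLem

end Stmt8A
end Aux


open Stmt8A in
set_option maxHeartbeats 1000000 in
theorem stmt8 {n m : ℕ} (lam : ℝ) (hlam : lam ∈ Set.Ioc (0 : ℝ) 1)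
    (A : Matrix (Fin n) (Fin n) ℝ) (B : Matrix (Fin n) (Fin m) ℝ)
    (hAB : Controllable A B)
    (X : Set (Euc n)) (U : Set (Euc m)) (hX : IsCSet X) (hU : IsCSet U)
    (rxlo rxhi ru : ℝ) (hrxlo : 0 < rxlo) (hrx : rxlo ≤ rxhi) (hru : 0 < ru)
    (hbX1 : closedBall (0 : Euc n) rxlo ⊆ X) (hbX2 : X ⊆ closedBall (0 : Euc n) rxhi)
    (hbU : closedBall (0 : Euc m) ru ⊆ U) :
    ∀ C D : Set (Euc n), IsCSet C → IsCSet D → C ⊆ D →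
      cdist (Qiter A B X U lam C n) (Qiter A B X U lam D n)
        ≤ (1 - rhoHat A B lam rxlo ru / rxhi) * cdist C D := by
  obtain ⟨hlam0, hlam1⟩ := hlam
  intro C D hC hD hCD
  rcases Nat.eq_zero_or_pos n with hn0 | hn
  · subst hn0
    haveI : IsEmpty (sphere (0 : Euc 0) 1) := by
      constructor
      rintro ⟨ξ, hξ⟩
      rw [mem_sphere_zero_iff_norm] at hξ
      have hz : ξ = 0 := by
        ext i
        exact i.elim0
      rw [hz, norm_zero] at hξ
      norm_num at hξ
    have hzero : ∀ S T : Set (Euc 0), cdist S T = 0 := by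
      intro S T
      rw [cdist, iSup, Set.range_eq_empty, Real.sSup_empty]
    rw [hzero, hzero, mul_zero]
  · set ρ' := rhoHat A B lam rxlo ru with hρdef
    have hσ : 0 < sigmaMin (ctrb A B) := sigmaMin_pos hn _ hAB
    have hσM : 0 ≤ sigmaMax (ctrb A B) := sigmaMax_nonneg _
    have hαpos := alphaA_pos A
    have hρpos : 0 < ρ' := by
      rw [hρdef, rhoHat]
      have h2 : 0 < lam ^ (n-1) / alphaA A := by positivity
      have h3 : 0 < min (rxlo / (1 + sigmaMax (ctrb A B) / sigmaMin (ctrb A B)))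
          (ru * sigmaMin (ctrb A B)) := by
        apply lt_min (by positivity) (by positivity)
      exact mul_pos h2 h3
    have hrxhi : 0 < rxhi := lt_of_lt_of_le hrxlo hrx
    obtain ⟨hXconv, hXcomp, hXint⟩ := hX
    obtain ⟨hUconv, hUcomp, hUint⟩ := hU
    have h0X : (0 : Euc n) ∈ X := interior_subset hXint
    have h0U : (0 : Euc m) ∈ U := interior_subset hUint
    have h0C : (0 : Euc n) ∈ C := interior_subset hC.2.2
    have h0D : (0 : Euc n) ∈ D := interior_subset hD.2.2
    set d := cdist C D with hd
    have hd0 : 0 ≤ d := Real.iSup_nonneg fun _ => abs_nonneg _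
    set γ := Real.exp (-d) with hγ
    have hγpos : 0 < γ := Real.exp_pos _
    have hγ1 : γ ≤ 1 := Real.exp_le_one_iff.mpr (by linarith)
    obtain ⟨rC, RC, hrC, hrRC, hCball, hCrho⟩ := csets_rho_bounds hC
    obtain ⟨rD, RD, hrD, hrRD, hDball, hDrho⟩ := csets_rho_bounds hD
    have hbddCD : BddAbove (Set.range fun ξ : sphere (0 : Euc n) 1 =>
        |Real.log (rho ξ C) - Real.log (rho ξ D)|) := by
      refine ⟨Real.log (max RC RD) - Real.log (min rC rD), ?_⟩
      rintro v ⟨ξ, rfl⟩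
      have hξ : ‖(ξ : Euc n)‖ = 1 := mem_sphere_zero_iff_norm.mp ξ.2
      obtain ⟨hC1, hC2⟩ := hCrho ξ hξ
      obtain ⟨hD1, hD2⟩ := hDrho ξ hξ
      have hmin : 0 < min rC rD := lt_min hrC hrD
      rw [abs_sub_le_iff]
      constructor
      · have l1 : Real.log (rho ξ C) ≤ Real.log (max RC RD) :=
          Real.log_le_log (by linarith) (le_trans hC2 (le_max_left _ _))
        have l2 : Real.log (min rC rD) ≤ Real.log (rho ξ D) :=
          Real.log_le_log hmin (le_trans (min_le_right _ _) hD1)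
        linarith
      · have l1 : Real.log (rho ξ D) ≤ Real.log (max RC RD) :=
          Real.log_le_log (by linarith) (le_trans hD2 (le_max_right _ _))
        have l2 : Real.log (min rC rD) ≤ Real.log (rho ξ C) :=
          Real.log_le_log hmin (le_trans (min_le_left _ _) hC1)
        linarith
    have hlogCD : ∀ ξ : Euc n, ‖ξ‖ = 1 →
        Real.log (rho ξ D) - Real.log (rho ξ C) ≤ d := by
      intro ξ hξ
      have h2 : |Real.log (rho ξ C) - Real.log (rho ξ D)| ≤ d :=
        le_ciSup hbddCD (⟨ξ, by rwa [mem_sphere_zero_iff_norm]⟩ : sphere (0 : Euc n) 1)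
      calc Real.log (rho ξ D) - Real.log (rho ξ C)
          ≤ |Real.log (rho ξ C) - Real.log (rho ξ D)| := by
            rw [abs_sub_comm]; exact le_abs_self _
        _ ≤ d := h2
    have hγD : ∀ z ∈ D, γ • z ∈ C := by
      intro z hz
      rcases eq_or_ne z 0 with rfl | hz0
      · rw [smul_zero]; exact h0C
      · have hzn : 0 < ‖z‖ := norm_pos_iff.mpr hz0
        set ξ : Euc n := ‖z‖⁻¹ • z with hξdef
        have hξ : ‖ξ‖ = 1 := by
          rw [hξdef, norm_smul, Real.norm_eq_abs, abs_of_pos (inv_pos.mpr hzn),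
            inv_mul_cancel₀ (ne_of_gt hzn)]
        have hmemD : ‖z‖ • ξ ∈ D := by
          rw [hξdef, smul_smul, mul_inv_cancel₀ (ne_of_gt hzn), one_smul]
          exact hz
        have h1 : ‖z‖ ≤ rho ξ D := le_rho hDball hξ hzn hmemD
        have hρDpos : 0 < rho ξ D := lt_of_lt_of_le hzn h1
        have hρCpos : 0 < rho ξ C := lt_of_lt_of_le hrC (hCrho ξ hξ).1
        have hlog := hlogCD ξ hξ
        have hγρ : γ * rho ξ D ≤ rho ξ C := by
          have hle : Real.log (rho ξ D) - d ≤ Real.log (rho ξ C) := by linarith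
          have h2 := Real.exp_le_exp.mpr hle
          rw [Real.exp_sub, Real.exp_log hρDpos, Real.exp_log hρCpos] at h2
          rw [hγ, Real.exp_neg]
          calc (Real.exp d)⁻¹ * rho ξ D = rho ξ D / Real.exp d := by
                rw [div_eq_mul_inv, mul_comm]
            _ ≤ rho ξ C := h2
        have h3 : γ * ‖z‖ ≤ rho ξ C := by
          have := mul_le_mul_of_nonneg_left h1 (le_of_lt hγpos)
          linarith
        have h4 : γ • z = (γ * ‖z‖) • ξ := by
          rw [hξdef, smul_smul, mul_assoc, mul_inv_cancel₀ (ne_of_gt hzn), mul_one]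
        rw [h4]
        exact smul_mem_of_le_rho hC.1 hC.2.1.isClosed h0C hξ (by positivity) h3
    set QC := Qiter A B X U lam C n with hQCdef
    set QD := Qiter A B X U lam D n with hQDdef
    have hQmono : QC ⊆ QD := Qiter_mono hCD n
    have hQDball : QD ⊆ closedBall 0 rxhi := (Qiter_subset_X hn).trans hbX2
    have hQCball : QC ⊆ closedBall 0 rxhi := (Qiter_subset_X hn).trans hbX2
    have hsteer : ∀ ξ : Euc n, ‖ξ‖ = 1 → ∀ E : Set (Euc n), (0 : Euc n) ∈ E →
        ρ' • ξ ∈ Qiter A B X U lam E n := by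
      intro ξ hξ E h0E
      have hxnorm : ‖ρ' • ξ‖ ≤ ρ' := by
        rw [norm_smul, hξ, mul_one, Real.norm_eq_abs, abs_of_pos hρpos]
      obtain ⟨xs, us, hxs0, hxsn, hrec, hxb, hub⟩ :=
        steer hn A B hAB lam rxlo ru hlam0 hlam1 hrxlo hru (ρ' • ξ) hxnorm
      have hk := key_combine hXconv hUconv hlam0 hbX1 hbU 0 le_rfl zero_le_one n E E
        (fun z hz => by rw [zero_smul]; exact h0E) 0 (zero_mem_Qiter h0X h0U h0E n)
        xs us hxsn hrec hxb hub
      rw [zero_smul, zero_add, sub_zero, one_smul, hxs0] at hk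
      exact hk
    have hperxi : ∀ ξ : sphere (0 : Euc n) 1,
        |Real.log (rho ξ QC) - Real.log (rho ξ QD)| ≤ (1 - ρ' / rxhi) * d := by
      intro ξ
      have hξ : ‖(ξ : Euc n)‖ = 1 := mem_sphere_zero_iff_norm.mp ξ.2
      set a := rho (ξ : Euc n) QC with ha
      set b := rho (ξ : Euc n) QD with hb2
      have hρa : ρ' ≤ a := le_rho hQCball hξ hρpos (hsteer ξ hξ C h0C)
      have hρb : ρ' ≤ b := le_rho hQDball hξ hρpos (hsteer ξ hξ D h0D)
      have hapos : 0 < a := lt_of_lt_of_le hρpos hρa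
      have hbpos : 0 < b := lt_of_lt_of_le hρpos hρb
      have hab : a ≤ b := csSup_le_csSup (bddAbove_rho_set hQDball hξ)
        ⟨ρ', hρpos, hsteer ξ hξ C h0C⟩ (fun μ hμ => ⟨hμ.1, hQmono hμ.2⟩)
      have hbR : b ≤ rxhi := rho_le_R (le_of_lt hrxhi) hQDball hξ
      have hTne : {μ : ℝ | 0 < μ ∧ μ • (ξ : Euc n) ∈ QD}.Nonempty :=
        ⟨ρ', hρpos, hsteer ξ hξ D h0D⟩
      have hkey : γ * b + (1-γ) * ρ' ≤ a := by
        apply le_of_forall_pos_le_add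
        intro ε hε
        have hlt : b - ε < sSup {μ : ℝ | 0 < μ ∧ μ • (ξ : Euc n) ∈ QD} := by
          have : b - ε < b := by linarith
          exact this
        obtain ⟨μ, hμT, hμgt⟩ := exists_lt_of_lt_csSup hTne hlt
        obtain ⟨hμ0, hμQD⟩ := hμT
        obtain ⟨xs, us, hxs0, hxsn, hrec, hxb, hub⟩ :=
          steer hn A B hAB lam rxlo ru hlam0 hlam1 hrxlo hru (ρ' • (ξ : Euc n))
            (by rw [norm_smul, hξ, mul_one, Real.norm_eq_abs, abs_of_pos hρpos])
        have hz := key_combine hXconv hUconv hlam0 hbX1 hbU γ (le_of_lt hγpos) hγ1 n C D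
          hγD (μ • (ξ : Euc n)) hμQD xs us hxsn hrec hxb hub
        rw [hxs0, smul_smul, smul_smul, ← add_smul] at hz
        have hmemle : γ * μ + (1-γ) * ρ' ≤ a := by
          apply le_rho hQCball hξ _ hz
          have hp1 : 0 < γ * μ := mul_pos hγpos hμ0
          have hp2 : 0 ≤ (1-γ) * ρ' := mul_nonneg (by linarith) (le_of_lt hρpos)
          linarith
        have hb1 : γ * b ≤ γ * μ + γ * ε := by nlinarith
        have hγε : γ * ε ≤ ε := by nlinarith
        linarith
      set t := ρ' / b with ht
      have ht0 : 0 < t := by positivity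
      have ht1 : t ≤ 1 := (div_le_one hbpos).mpr hρb
      have hs0 : 0 < γ + (1-γ) * t := by nlinarith
      have hbs : b * (γ + (1-γ) * t) = γ * b + (1-γ) * ρ' := by
        rw [ht]
        field_simp
      have hloga : Real.log b + Real.log (γ + (1-γ) * t) ≤ Real.log a := by
        rw [← Real.log_mul (ne_of_gt hbpos) (ne_of_gt hs0), hbs]
        apply Real.log_le_log _ hkey
        have hp1 : 0 < γ * b := mul_pos hγpos hbpos
        have hp2 : 0 ≤ (1-γ) * ρ' := mul_nonneg (by linarith) (le_of_lt hρpos)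
        linarith
      have hamgm : γ ^ (1-t) ≤ γ + (1-γ) * t := by
        have h := Real.geom_mean_le_arith_mean2_weighted
          (by linarith : (0:ℝ) ≤ 1-t) (le_of_lt ht0) (le_of_lt hγpos) zero_le_one
          (by ring)
        rw [Real.one_rpow, mul_one] at h
        calc γ ^ (1-t) ≤ (1-t) * γ + t * 1 := h
          _ = γ + (1-γ) * t := by ring
      have hlogs : (1-t) * Real.log γ ≤ Real.log (γ + (1-γ) * t) := by
        have h := Real.log_le_log (Real.rpow_pos_of_pos hγpos _) hamgm
        rwa [Real.log_rpow hγpos] at h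
      have hlogγ : Real.log γ = -d := by rw [hγ, Real.log_exp]
      have habs : |Real.log a - Real.log b| = Real.log b - Real.log a := by
        rw [abs_of_nonpos (by linarith [Real.log_le_log hapos hab])]
        ring
      rw [habs]
      rw [hlogγ] at hlogs
      have htt : ρ' / rxhi ≤ t := by
        rw [ht]
        gcongr
      have hfinal : Real.log b - Real.log a ≤ (1-t) * d := by linarith
      calc Real.log b - Real.log a ≤ (1-t) * d := hfinal
        _ ≤ (1 - ρ' / rxhi) * d := mul_le_mul_of_nonneg_right (by linarith) hd0
    have hη0 : 0 ≤ (1 - ρ' / rxhi) * d := by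
      set ξ0 : Euc n := EuclideanSpace.single (⟨0, hn⟩ : Fin n) (1:ℝ) with hξ0def
      have hξ0 : ‖ξ0‖ = 1 := by
        rw [hξ0def, EuclideanSpace.norm_single, norm_one]
      have h1 : ρ' ≤ rho ξ0 QD := le_rho hQDball hξ0 hρpos (hsteer ξ0 hξ0 D h0D)
      have h2 : rho ξ0 QD ≤ rxhi := rho_le_R (le_of_lt hrxhi) hQDball hξ0
      have h3 : ρ' / rxhi ≤ 1 := (div_le_one hrxhi).mpr (by linarith)
      have h4 : 0 ≤ 1 - ρ' / rxhi := by linarith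
      exact mul_nonneg h4 hd0
    exact Real.iSup_le hperxi hη0
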